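/- arXiv:1211.6547 — 5 statements merged into one kernel-verified Lean document; each statement's English description precedes it below -/
import Mathlib

section
/- Fix t ∈ (0,1). Assume there exist a constant C > 0 and a neighborhood U ⊆ [0,1] of t such that μ_τ(A) ≤ C·m(A) for every Borel set A ⊆ X and every τ ∈ U, and assume m(e_t(G)^{ε₀}) < ∞ for some ε₀ > 0. Then the functions γ ↦ ℒ¹(I_t(γ) ∩ (t−ε, t+ε))/(2ε) converge to the constant function 1 in L¹(𝛄) as ε → 0⁺; that is, lim_{ε→0⁺} ∫_G |ℒ¹(I_t(γ) ∩ (t−ε, t+ε))/(2ε) − 1| 𝛄(dγ) = 0. -/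
open MeasureTheory Set Filter Metric

/-- Evaluation of a continuous curve `γ : C([0,1], X)` at a real time `τ`
(times outside `[0,1]` are clamped via `projIcc`; we only use `τ ∈ [0,1]`). -/
noncomputable def ev {X : Type*} [TopologicalSpace X] (τ : ℝ) (γ : C(unitInterval, X)) : X :=
  γ (Set.projIcc 0 1 zero_le_one τ)

/-- A curve `γ ∈ C([0,1], X)` is a constant-speed geodesic if
`d(γ_s, γ_τ) = |s - τ| · d(γ_0, γ_1)` for all `s, τ ∈ [0,1]`. -/
def IsCSGeodesic {X : Type*} [MetricSpace X] (γ : C(unitInterval, X)) : Prop :=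
  ∀ s τ : unitInterval, dist (γ s) (γ τ) = |(s : ℝ) - (τ : ℝ)| * dist (γ 0) (γ 1)

/-- The (topological) support of a Borel measure: the set of points all of whose
open neighborhoods have positive measure. -/
def mSupport {α : Type*} [TopologicalSpace α] [MeasurableSpace α]
    (μ : MeasureTheory.Measure α) : Set α :=
  {x | ∀ U : Set α, IsOpen U → x ∈ U → 0 < μ U}

section Aux

variable {X : Type*} [MetricSpace X]

lemma ev_continuous2 : Continuous fun p : C(unitInterval, X) × ℝ => ev p.2 p.1 := by
  have h : Continuous fun p : C(unitInterval, X) × unitInterval => p.1 p.2 := continuous_eval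
  have h2 : Continuous fun p : C(unitInterval, X) × ℝ =>
      ((p.1, Set.projIcc 0 1 zero_le_one p.2) : C(unitInterval, X) × unitInterval) :=
    continuous_fst.prodMk ((continuous_projIcc).comp continuous_snd)
  exact h.comp h2

lemma ev_continuous (τ : ℝ) : Continuous fun γ : C(unitInterval, X) => ev τ γ :=
  continuous_eval_const _

lemma coe_projIcc_of_mem {τ : ℝ} (hτ : τ ∈ Set.Icc (0:ℝ) 1) :
    ((Set.projIcc 0 1 zero_le_one τ : unitInterval) : ℝ) = τ := by
  rw [Set.coe_projIcc]
  rw [min_eq_right hτ.2, max_eq_right hτ.1]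

lemma ev_dist_geodesic {γ : C(unitInterval, X)} (h : IsCSGeodesic γ)
    {τ s : ℝ} (hτ : τ ∈ Set.Icc (0:ℝ) 1) (hs : s ∈ Set.Icc (0:ℝ) 1) :
    dist (ev τ γ) (ev s γ) = |τ - s| * dist (γ 0) (γ 1) := by
  rw [ev, ev, h, coe_projIcc_of_mem hτ, coe_projIcc_of_mem hs]

end Aux

/-- If near `t ∈ (0,1)` all the measures `μ_τ = (e_τ)_♯ P` have density
bounded by `C` w.r.t. `m`, and some closed `ε₀`-neighborhood of `e_t(G)` has finite
`m`-measure, then `γ ↦ ℒ¹(I_t(γ) ∩ (t - ε, t + ε)) / (2ε)` converges to the constant `1`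
in `L¹(P)` as `ε → 0⁺`. -/
theorem self_intersection_L1_density_one
    {X : Type*} [MetricSpace X] [CompleteSpace X] [TopologicalSpace.SeparableSpace X]
    [MeasurableSpace X] [BorelSpace X]
    (m : MeasureTheory.Measure X)
    [MeasurableSpace C(unitInterval, X)] [BorelSpace C(unitInterval, X)]
    (P : MeasureTheory.Measure C(unitInterval, X)) [IsProbabilityMeasure P]
    (G : Set C(unitInterval, X)) (hGsupp : G = mSupport P)
    (hGcpt : IsCompact G) (hGgeo : ∀ γ ∈ G, IsCSGeodesic γ)
    (t : ℝ) (ht : t ∈ Set.Ioo (0 : ℝ) 1)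
    (C : ℝ) (hC : 0 < C)
    (U : Set ℝ) (hUsub : U ⊆ Set.Icc (0 : ℝ) 1) (hUnhds : U ∈ nhdsWithin t (Set.Icc (0 : ℝ) 1))
    (hdens : ∀ τ ∈ U, ∀ A : Set X, MeasurableSet A →
      MeasureTheory.Measure.map (ev τ) P A ≤ ENNReal.ofReal C * m A)
    (ε₀ : ℝ) (hε₀ : 0 < ε₀)
    (hfin : m (Metric.cthickening ε₀ (ev t '' G)) < ⊤) :
    Filter.Tendsto
      (fun ε : ℝ => ∫ γ in G,
        |(MeasureTheory.volume
            ({τ : ℝ | τ ∈ Set.Icc (0 : ℝ) 1 ∧ ev τ γ ∈ ev t '' G} ∩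
              Set.Ioo (t - ε) (t + ε))).toReal / (2 * ε) - 1| ∂P)
      (nhdsWithin 0 (Set.Ioi 0)) (nhds 0) := by
  obtain ⟨ht0, ht1⟩ := ht
  set K : Set X := ev t '' G with hKdef
  have hGclosed : IsClosed G := hGcpt.isClosed
  have hGmeas : MeasurableSet G := hGclosed.measurableSet
  have hKcpt : IsCompact K := hGcpt.image (ev_continuous t)
  have hKclosed : IsClosed K := hKcpt.isClosed
  have hKmeas : MeasurableSet K := hKclosed.measurableSet
  -- a bound on the lengths of geodesics in G
  obtain ⟨D₀, hD₀⟩ := hGcpt.exists_bound_of_continuousOn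
    (f := fun γ : C(unitInterval, X) => dist (γ 0) (γ 1))
    (((continuous_eval_const _).dist (continuous_eval_const _)).continuousOn)
  set D : ℝ := max D₀ 1 with hDdef
  have hD1 : (1:ℝ) ≤ D := le_max_right _ _
  have hDpos : (0:ℝ) < D := lt_of_lt_of_le one_pos hD1
  have hDbound : ∀ γ ∈ G, dist (γ 0) (γ 1) ≤ D := by
    intro γ hγ
    have h := hD₀ γ hγ
    rw [Real.norm_eq_abs] at h
    exact ((le_abs_self _).trans h).trans (le_max_left _ _)
  obtain ⟨ε₁, hε₁pos, hball⟩ := mem_nhdsWithin_iff.mp hUnhds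
  -- the "bad" set in the product space
  set W : Set (C(unitInterval, X) × ℝ) := {p | ev p.2 p.1 ∉ K} with hWdef
  have hWmeas : MeasurableSet W :=
    ((ev_continuous2.measurable) hKmeas).compl
  have hKfin : m K ≠ ⊤ := (lt_of_le_of_lt (measure_mono (self_subset_cthickening K)) hfin).ne
  -- the key quantitative estimate for small ε
  have key : ∀ ε : ℝ, 0 < ε → ε ≤ t → t + ε ≤ 1 → ε ≤ ε₁ → D * ε ≤ ε₀ →
      (∫ γ in G,
        |(MeasureTheory.volume
            ({τ : ℝ | τ ∈ Set.Icc (0 : ℝ) 1 ∧ ev τ γ ∈ K} ∩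
              Set.Ioo (t - ε) (t + ε))).toReal / (2 * ε) - 1| ∂P)
        ≤ C * (m (cthickening (D * ε) K \ K)).toReal := by
    intro ε hε hεt hεt1 hεε₁ hεD
    have h2ε : (0:ℝ) < 2 * ε := by linarith
    set Iv : Set ℝ := Set.Ioo (t - ε) (t + ε) with hIvdef
    have hIvIcc : Iv ⊆ Set.Icc (0:ℝ) 1 := fun τ hτ =>
      ⟨by have := hτ.1; linarith,
       by have := hτ.2; linarith⟩
    have hvolIv : volume Iv = ENNReal.ofReal (2 * ε) := by
      rw [hIvdef, Real.volume_Ioo]; congr 1; ring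
    have hIvfin : volume Iv ≠ ⊤ := by rw [hvolIv]; exact ENNReal.ofReal_ne_top
    set Δ : Set X := cthickening (D * ε) K \ K with hΔdef
    have hΔmeas : MeasurableSet Δ := isClosed_cthickening.measurableSet.diff hKmeas
    have hΔfin : m Δ ≠ ⊤ := by
      refine (lt_of_le_of_lt (measure_mono ?_) hfin).ne
      exact diff_subset.trans (cthickening_mono hεD K)
    have hsecm : ∀ γ : C(unitInterval, X),
        MeasurableSet {τ : ℝ | τ ∈ Set.Icc (0:ℝ) 1 ∧ ev τ γ ∈ K} := by
      intro γ
      have hc : Continuous fun τ : ℝ => ev τ γ :=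
        ev_continuous2.comp (continuous_const.prodMk continuous_id)
      exact measurableSet_Icc.inter (hc.measurable hKmeas)
    -- pointwise rewriting of the integrand
    have hpt : ∀ γ : C(unitInterval, X),
        |(volume ({τ : ℝ | τ ∈ Set.Icc (0:ℝ) 1 ∧ ev τ γ ∈ K} ∩ Iv)).toReal / (2 * ε) - 1|
          = (volume (Iv \ {τ : ℝ | τ ∈ Set.Icc (0:ℝ) 1 ∧ ev τ γ ∈ K})).toReal / (2 * ε) := by
      intro γ
      set S := {τ : ℝ | τ ∈ Set.Icc (0:ℝ) 1 ∧ ev τ γ ∈ K} with hS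
      have hsplit : volume (Iv ∩ S) + volume (Iv \ S) = volume Iv :=
        measure_inter_add_diff Iv (hsecm γ)
      have ha : volume (Iv ∩ S) ≠ ⊤ := ne_top_of_le_ne_top hIvfin (measure_mono inter_subset_left)
      have hb : volume (Iv \ S) ≠ ⊤ := ne_top_of_le_ne_top hIvfin (measure_mono diff_subset)
      have htR : (volume (Iv ∩ S)).toReal + (volume (Iv \ S)).toReal = 2 * ε := by
        rw [← ENNReal.toReal_add ha hb, hsplit, hvolIv, ENNReal.toReal_ofReal h2ε.le]
      have hbnn : 0 ≤ (volume (Iv \ S)).toReal := ENNReal.toReal_nonneg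
      rw [inter_comm]
      have hval : (volume (Iv ∩ S)).toReal = 2 * ε - (volume (Iv \ S)).toReal := by linarith
      rw [hval]
      have hrw : (2 * ε - (volume (Iv \ S)).toReal) / (2 * ε) - 1
          = -((volume (Iv \ S)).toReal / (2 * ε)) := by
        field_simp
        ring
      rw [hrw, abs_neg, abs_of_nonneg (div_nonneg hbnn h2ε.le)]
    have hIeq : (∫ γ in G,
        |(volume ({τ : ℝ | τ ∈ Set.Icc (0:ℝ) 1 ∧ ev τ γ ∈ K} ∩ Iv)).toReal / (2 * ε) - 1| ∂P)
        = (∫ γ in G, (volume (Iv \ {τ : ℝ | τ ∈ Set.Icc (0:ℝ) 1 ∧ ev τ γ ∈ K})).toReal ∂P)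
          / (2 * ε) := by
      rw [← integral_div]
      exact integral_congr_ae (ae_of_all _ hpt)
    -- the section measure identity
    have hsec_eq : ∀ γ : C(unitInterval, X),
        volume (Iv \ {τ : ℝ | τ ∈ Set.Icc (0:ℝ) 1 ∧ ev τ γ ∈ K})
          = (volume.restrict Iv) (Prod.mk γ ⁻¹' W) := by
      intro γ
      rw [Measure.restrict_apply (measurable_prodMk_left hWmeas)]
      congr 1
      ext τ
      simp only [hWdef, Set.mem_diff, Set.mem_setOf_eq, Set.mem_inter_iff, Set.mem_preimage]
      constructor
      · rintro ⟨h1, h2⟩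
        exact ⟨fun hk => h2 ⟨hIvIcc h1, hk⟩, h1⟩
      · rintro ⟨h1, h2⟩
        exact ⟨h2, fun hs' => h1 hs'.2⟩
    have hmeasb : Measurable fun γ => (volume.restrict Iv) (Prod.mk γ ⁻¹' W) :=
      measurable_measure_prodMk_left hWmeas
    have hfinb : ∀ γ, (volume.restrict Iv) (Prod.mk γ ⁻¹' W) ≤ ENNReal.ofReal (2 * ε) := by
      intro γ
      rw [← hvolIv, ← Measure.restrict_apply_univ Iv]
      exact measure_mono (subset_univ _)
    -- the lintegral estimate via Fubini
    have hlint : ∫⁻ γ, (volume.restrict Iv) (Prod.mk γ ⁻¹' W) ∂(P.restrict G)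
        ≤ ENNReal.ofReal (2 * ε) * (ENNReal.ofReal C * m Δ) := by
      have hprod : ∫⁻ γ, (volume.restrict Iv) (Prod.mk γ ⁻¹' W) ∂(P.restrict G)
          = ((P.restrict G).prod (volume.restrict Iv)) W := (Measure.prod_apply hWmeas).symm
      rw [hprod, Measure.prod_apply_symm hWmeas]
      have hτb : ∀ τ ∈ Iv, (P.restrict G) ((fun γ => (γ, τ)) ⁻¹' W)
          ≤ ENNReal.ofReal C * m Δ := by
        intro τ hτ
        have hτ' := hτ
        rw [hIvdef, Set.mem_Ioo] at hτ'
        have hτIcc : τ ∈ Set.Icc (0:ℝ) 1 := hIvIcc hτ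
        have habs : |τ - t| < ε := abs_sub_lt_iff.mpr ⟨by linarith [hτ'.2], by linarith [hτ'.1]⟩
        have hτU : τ ∈ U := by
          apply hball
          refine ⟨?_, hτIcc⟩
          rw [mem_ball, Real.dist_eq]
          exact habs.trans_le hεε₁
        rw [Measure.restrict_apply' hGmeas]
        have hsub : ((fun γ => (γ, τ)) ⁻¹' W) ∩ G ⊆ ev τ ⁻¹' Δ := by
          rintro γ ⟨hγW, hγG⟩
          have hd : dist (ev τ γ) (ev t γ) ≤ D * ε := by
            rw [ev_dist_geodesic (hGgeo γ hγG) hτIcc ⟨ht0.le, ht1.le⟩]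
            calc |τ - t| * dist (γ 0) (γ 1) ≤ ε * D :=
                  mul_le_mul habs.le (hDbound γ hγG) dist_nonneg hε.le
              _ = D * ε := mul_comm _ _
          have hmem : ev t γ ∈ K := mem_image_of_mem _ hγG
          exact ⟨mem_cthickening_of_dist_le _ _ _ _ hmem hd, hγW⟩
        calc P (((fun γ => (γ, τ)) ⁻¹' W) ∩ G) ≤ P (ev τ ⁻¹' Δ) := measure_mono hsub
          _ = Measure.map (ev τ) P Δ :=
              (Measure.map_apply (ev_continuous τ).measurable hΔmeas).symm
          _ ≤ ENNReal.ofReal C * m Δ := hdens τ hτU Δ hΔmeas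
      calc ∫⁻ τ, (P.restrict G) ((fun γ => (γ, τ)) ⁻¹' W) ∂(volume.restrict Iv)
          ≤ ∫⁻ _ in Iv, (ENNReal.ofReal C * m Δ) ∂volume := setLIntegral_mono measurable_const hτb
        _ = (ENNReal.ofReal C * m Δ) * volume Iv := setLIntegral_const _ _
        _ = ENNReal.ofReal (2 * ε) * (ENNReal.ofReal C * m Δ) := by rw [hvolIv, mul_comm]
    -- back to the real integral
    have hintR : (∫ γ in G,
        (volume (Iv \ {τ : ℝ | τ ∈ Set.Icc (0:ℝ) 1 ∧ ev τ γ ∈ K})).toReal ∂P)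
        ≤ 2 * ε * (C * (m Δ).toReal) := by
      have h1 : (∫ γ in G,
          (volume (Iv \ {τ : ℝ | τ ∈ Set.Icc (0:ℝ) 1 ∧ ev τ γ ∈ K})).toReal ∂P)
          = (∫⁻ γ, (volume.restrict Iv) (Prod.mk γ ⁻¹' W) ∂(P.restrict G)).toReal := by
        simp_rw [hsec_eq]
        exact integral_toReal hmeasb.aemeasurable
          (ae_of_all _ fun γ => (hfinb γ).trans_lt ENNReal.ofReal_lt_top)
      rw [h1]
      calc (∫⁻ γ, (volume.restrict Iv) (Prod.mk γ ⁻¹' W) ∂(P.restrict G)).toReal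
          ≤ (ENNReal.ofReal (2 * ε) * (ENNReal.ofReal C * m Δ)).toReal :=
            ENNReal.toReal_mono
              (ENNReal.mul_ne_top ENNReal.ofReal_ne_top
                (ENNReal.mul_ne_top ENNReal.ofReal_ne_top hΔfin)) hlint
        _ = 2 * ε * (C * (m Δ).toReal) := by
            rw [ENNReal.toReal_mul, ENNReal.toReal_mul, ENNReal.toReal_ofReal h2ε.le,
              ENNReal.toReal_ofReal hC.le]
    rw [hIeq, div_le_iff₀ h2ε]
    calc (∫ γ in G,
        (volume (Iv \ {τ : ℝ | τ ∈ Set.Icc (0:ℝ) 1 ∧ ev τ γ ∈ K})).toReal ∂P)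
        ≤ 2 * ε * (C * (m Δ).toReal) := hintR
      _ = C * (m Δ).toReal * (2 * ε) := by ring
  -- the upper bound tends to 0
  have hg0 : Tendsto (fun ε : ℝ => C * (m (cthickening (D * ε) K \ K)).toReal)
      (nhdsWithin 0 (Set.Ioi 0)) (nhds 0) := by
    have h1 : Tendsto (fun r : ℝ => m (cthickening r K)) (nhds 0) (nhds (m K)) :=
      tendsto_measure_cthickening_of_isClosed ⟨ε₀, hε₀, hfin.ne⟩ hKclosed
    have h2 : Tendsto (fun ε : ℝ => D * ε) (nhdsWithin 0 (Set.Ioi 0)) (nhds 0) := by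
      have h3 : Tendsto (fun ε : ℝ => D * ε) (nhds 0) (nhds (D * 0)) :=
        (continuous_const.mul continuous_id).tendsto 0
      rw [mul_zero] at h3
      exact h3.mono_left nhdsWithin_le_nhds
    have hT : Tendsto (fun ε : ℝ => m (cthickening (D * ε) K))
        (nhdsWithin 0 (Set.Ioi 0)) (nhds (m K)) := h1.comp h2
    have hTr : Tendsto (fun ε : ℝ => (m (cthickening (D * ε) K)).toReal)
        (nhdsWithin 0 (Set.Ioi 0)) (nhds (m K).toReal) :=
      (ENNReal.tendsto_toReal hKfin).comp hT
    have heq : ∀ᶠ ε in nhdsWithin (0:ℝ) (Set.Ioi 0),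
        C * ((m (cthickening (D * ε) K)).toReal - (m K).toReal)
          = C * (m (cthickening (D * ε) K \ K)).toReal := by
      filter_upwards [Ioo_mem_nhdsGT_of_mem
        (⟨le_refl (0:ℝ), div_pos hε₀ hDpos⟩ : (0:ℝ) ∈ Set.Ico 0 (ε₀ / D))] with ε hε
      have hDε : D * ε ≤ ε₀ := (le_div_iff₀' hDpos).mp hε.2.le
      have hfin' : m (cthickening (D * ε) K) ≠ ⊤ :=
        ne_top_of_le_ne_top hfin.ne (measure_mono (cthickening_mono hDε K))
      rw [measure_diff (self_subset_cthickening K) hKmeas.nullMeasurableSet hKfin,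
        ENNReal.toReal_sub_of_le (measure_mono (self_subset_cthickening K)) hfin']
    have haux : Tendsto
        (fun ε : ℝ => C * ((m (cthickening (D * ε) K)).toReal - (m K).toReal))
        (nhdsWithin 0 (Set.Ioi 0)) (nhds (C * ((m K).toReal - (m K).toReal))) :=
      tendsto_const_nhds.mul (hTr.sub tendsto_const_nhds)
    rw [sub_self, mul_zero] at haux
    exact haux.congr' heq
  -- conclude by squeezing
  have hδpos : 0 < min (min t (1 - t)) (min ε₁ (ε₀ / D)) :=
    lt_min (lt_min ht0 (by linarith)) (lt_min hε₁pos (div_pos hε₀ hDpos))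
  apply squeeze_zero' ?_ ?_ hg0
  · filter_upwards [self_mem_nhdsWithin] with ε _
    exact integral_nonneg fun γ => abs_nonneg _
  · filter_upwards [Ioo_mem_nhdsGT_of_mem
      (⟨le_refl (0:ℝ), hδpos⟩ : (0:ℝ) ∈ Set.Ico 0 (min (min t (1 - t)) (min ε₁ (ε₀ / D))))]
      with ε hε
    have h1 : ε ≤ t := le_trans hε.2.le ((min_le_left _ _).trans (min_le_left _ _))
    have h2 : t + ε ≤ 1 := by
      have : ε ≤ 1 - t := le_trans hε.2.le ((min_le_left _ _).trans (min_le_right _ _))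
      linarith
    have h3 : ε ≤ ε₁ := le_trans hε.2.le ((min_le_right _ _).trans (min_le_left _ _))
    have h4 : D * ε ≤ ε₀ := by
      have : ε ≤ ε₀ / D := le_trans hε.2.le ((min_le_right _ _).trans (min_le_right _ _))
      exact (le_div_iff₀' hDpos).mp this
    exact key ε hε.1 h1 h2 h3 h4
end

section
/- Fix t ∈ (0,1). Assume there exist a constant C > 0 and a neighborhood U ⊆ [0,1] of t such that μ_τ(A) ≤ C·m(A) for every Borel set A ⊆ X and every τ ∈ U, and assume m(e_t(G)^{ε₀}) < ∞ for some ε₀ > 0. Then for every sequence εₙ of positive reals converging to 0 there exists a 𝛄-null set H ⊆ G (which may depend on the sequence) such that for every γ ∈ G ∖ H one has limsup_{n→∞} ℒ¹(I_t(γ) ∩ (t−εₙ, t+εₙ))/(2εₙ) = 1. -/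
open MeasureTheory Set Filter Metric
open scoped ENNReal NNReal
set_option maxHeartbeats 1000000

lemma bridge_limsup_toReal {u : ℕ → ℝ≥0∞} (hu : ∀ n, u n ≤ 1)
    (h : Filter.limsup u Filter.atTop = 1) :
    Filter.limsup (fun n => (u n).toReal) Filter.atTop = 1 := by
  have hle : ∀ n, (u n).toReal ≤ 1 := fun n => by
    simpa using ENNReal.toReal_mono ENNReal.one_ne_top (hu n)
  have hbdd : IsBoundedUnder (· ≤ ·) atTop fun n => (u n).toReal :=
    isBoundedUnder_of ⟨1, hle⟩
  have hbdd' : IsBoundedUnder (· ≥ ·) atTop fun n => (u n).toReal :=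
    isBoundedUnder_of ⟨0, fun n => ENNReal.toReal_nonneg⟩
  have hL0 : 0 ≤ limsup (fun n => (u n).toReal) atTop :=
    le_limsup_of_frequently_le (Frequently.of_forall fun n => ENNReal.toReal_nonneg) hbdd
  refine le_antisymm (limsup_le_of_le hbdd'.isCoboundedUnder_le (Eventually.of_forall hle)) ?_
  have key : ∀ δ : ℝ, 0 < δ → 1 - δ ≤ limsup (fun n => (u n).toReal) atTop := by
    intro δ h0
    rcases le_or_gt 1 δ with hδ1 | hδ1
    · linarith
    have hlt : ENNReal.ofReal (1 - δ) < limsup u atTop := by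
      rw [h]; exact ENNReal.ofReal_lt_one.2 (by linarith)
    have hfreq : ∃ᶠ n in atTop, ENNReal.ofReal (1 - δ) < u n :=
      frequently_lt_of_lt_limsup (by isBoundedDefault) hlt
    refine le_limsup_of_frequently_le (hfreq.mono fun n hn => ?_) hbdd
    have hnt : u n ≠ ⊤ := ne_top_of_le_ne_top ENNReal.one_ne_top (hu n)
    have := ENNReal.toReal_mono hnt hn.le
    rwa [ENNReal.toReal_ofReal (by linarith)] at this
  by_contra hcon
  push_neg at hcon
  obtain ⟨δ, h0, h1⟩ : ∃ δ : ℝ, 0 < δ ∧ 1 - δ > limsup (fun n => (u n).toReal) atTop :=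
    ⟨(1 - limsup (fun n => (u n).toReal) atTop) / 2, by linarith, by linarith⟩
  exact absurd (key δ h0) (not_le.2 h1)

/-- Under the bounded-density assumption near `t ∈ (0,1)`, for every
sequence `εₙ → 0⁺` there is a `P`-null set `H ⊆ G` (depending on the sequence) such that
for every `γ ∈ G \ H`,
`limsup_n ℒ¹(I_t(γ) ∩ (t - εₙ, t + εₙ)) / (2εₙ) = 1`. -/
theorem self_intersection_ae_limsup_along_sequences
    {X : Type*} [MetricSpace X] [CompleteSpace X] [TopologicalSpace.SeparableSpace X]
    [MeasurableSpace X] [BorelSpace X]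
    (m : MeasureTheory.Measure X)
    [MeasurableSpace C(unitInterval, X)] [BorelSpace C(unitInterval, X)]
    (P : MeasureTheory.Measure C(unitInterval, X)) [IsProbabilityMeasure P]
    (G : Set C(unitInterval, X)) (hGsupp : G = mSupport P)
    (hGcpt : IsCompact G) (hGgeo : ∀ γ ∈ G, IsCSGeodesic γ)
    (t : ℝ) (ht : t ∈ Set.Ioo (0 : ℝ) 1)
    (C : ℝ) (hC : 0 < C)
    (U : Set ℝ) (hUsub : U ⊆ Set.Icc (0 : ℝ) 1) (hUnhds : U ∈ nhdsWithin t (Set.Icc (0 : ℝ) 1))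
    (hdens : ∀ τ ∈ U, ∀ A : Set X, MeasurableSet A →
      MeasureTheory.Measure.map (ev τ) P A ≤ ENNReal.ofReal C * m A)
    (ε₀ : ℝ) (hε₀ : 0 < ε₀)
    (hfin : m (Metric.cthickening ε₀ (ev t '' G)) < ⊤) :
    ∀ ε : ℕ → ℝ, (∀ n, 0 < ε n) → Filter.Tendsto ε Filter.atTop (nhds 0) →
      ∃ H ⊆ G, P H = 0 ∧ ∀ γ ∈ G \ H,
        Filter.limsup
          (fun n : ℕ => (MeasureTheory.volume
              ({τ : ℝ | τ ∈ Set.Icc (0 : ℝ) 1 ∧ ev τ γ ∈ ev t '' G} ∩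
                Set.Ioo (t - ε n) (t + ε n))).toReal / (2 * ε n))
          Filter.atTop = 1 := by
  intro ε hεpos hεlim
  have htmem : t ∈ Set.Icc (0:ℝ) 1 := ⟨ht.1.le, ht.2.le⟩
  set K : Set X := ev t '' G with hKdef
  have hevcont : ∀ τ : ℝ, Continuous (ev (X := X) τ) := fun τ =>
    continuous_eval_const (Set.projIcc 0 1 zero_le_one τ)
  have hKcpt : IsCompact K := hGcpt.image (hevcont t)
  have hKclosed : IsClosed K := hKcpt.isClosed
  have hKmeas : MeasurableSet K := hKclosed.measurableSet
  have hGmeas : MeasurableSet G := hGcpt.isClosed.measurableSet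
  -- bound on the speeds
  obtain ⟨D, hD0, hDbd⟩ : ∃ D : ℝ, 0 < D ∧ ∀ γ ∈ G, dist (γ 0) (γ 1) ≤ D := by
    have hc : Continuous fun γ : C(unitInterval, X) => dist (γ 0) (γ 1) :=
      Continuous.dist (continuous_eval_const 0) (continuous_eval_const 1)
    obtain ⟨B, hB⟩ := (hGcpt.image hc).bddAbove
    exact ⟨max B 1, lt_of_lt_of_le one_pos (le_max_right _ _),
      fun γ hγ => le_trans (hB (Set.mem_image_of_mem _ hγ)) (le_max_left _ _)⟩
  -- distance control
  have hdist : ∀ γ ∈ G, ∀ τ ∈ Set.Icc (0:ℝ) 1, dist (ev τ γ) (ev t γ) ≤ |τ - t| * D := by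
    intro γ hγ τ hτ
    have h1 := hGgeo γ hγ (Set.projIcc 0 1 zero_le_one τ) (Set.projIcc 0 1 zero_le_one t)
    have hτ' : ((Set.projIcc 0 1 zero_le_one τ : unitInterval) : ℝ) = τ := by
      rw [Set.projIcc_of_mem _ hτ]
    have ht' : ((Set.projIcc 0 1 zero_le_one t : unitInterval) : ℝ) = t := by
      rw [Set.projIcc_of_mem _ htmem]
    rw [ev, ev, h1, hτ', ht']
    exact mul_le_mul_of_nonneg_left (hDbd γ hγ) (abs_nonneg _)
  -- membership in thickening
  have hthick : ∀ r : ℝ, ∀ τ ∈ Set.Icc (0:ℝ) 1, |τ - t| * D ≤ r →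
      ∀ γ ∈ G, ev τ γ ∈ Metric.cthickening r K := by
    intro r τ hτ hr γ hγ
    exact Metric.mem_cthickening_of_dist_le (ev τ γ) (ev t γ) r K
      (Set.mem_image_of_mem _ hγ) (le_trans (hdist γ hγ τ hτ) hr)
  have hmK : m K ≠ ⊤ :=
    (lt_of_le_of_lt (measure_mono (Metric.self_subset_cthickening K)) hfin).ne
  have htendm : Tendsto (fun r => m (Metric.cthickening r K)) (nhds 0) (nhds (m K)) := by
    have := tendsto_measure_cthickening (μ := m) (s := K) ⟨ε₀, hε₀, hfin.ne⟩
    rwa [hKclosed.closure_eq] at this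
  -- Step B : eventual smallness
  have hsmall : ∀ δ : ℝ, 0 < δ → ∀ᶠ τ in nhdsWithin t (Set.Icc (0:ℝ) 1),
      P {γ | γ ∈ G ∧ ev τ γ ∉ K} ≤ ENNReal.ofReal δ := by
    intro δ hδ
    set η := ENNReal.ofReal (δ / C) with hηdef
    have hη : 0 < η := ENNReal.ofReal_pos.2 (div_pos hδ hC)
    have h1 : ∀ᶠ r in nhds (0:ℝ), m (Metric.cthickening r K) < m K + η :=
      htendm.eventually_lt_const (ENNReal.lt_add_right hmK hη.ne')
    obtain ⟨r, hr, hr0⟩ := ((h1.filter_mono (nhdsWithin_le_nhds (s := Set.Ioi (0:ℝ)))).and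
      self_mem_nhdsWithin).exists
    have hmdiff : m (Metric.cthickening r K \ K) ≤ η := by
      rw [measure_diff (Metric.self_subset_cthickening K) hKmeas.nullMeasurableSet hmK]
      exact tsub_le_iff_right.2 (by rw [add_comm]; exact hr.le)
    have hUev : ∀ᶠ τ in nhdsWithin t (Set.Icc (0:ℝ) 1), τ ∈ U :=
      eventually_of_mem hUnhds fun x hx => hx
    have hcont2 : Tendsto (fun τ : ℝ => |τ - t| * D) (nhds t) (nhds 0) := by
      have hc : Continuous fun τ : ℝ => |τ - t| * D := by continuity
      have h0 : |t - t| * D = 0 := by simp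
      simpa [h0] using hc.tendsto t
    have hnear : ∀ᶠ τ in nhdsWithin t (Set.Icc (0:ℝ) 1), |τ - t| * D ≤ r :=
      ((hcont2.eventually_lt_const hr0).filter_mono nhdsWithin_le_nhds).mono fun τ h => h.le
    have hIccev : ∀ᶠ τ in nhdsWithin t (Set.Icc (0:ℝ) 1), τ ∈ Set.Icc (0:ℝ) 1 :=
      eventually_mem_nhdsWithin
    filter_upwards [hUev, hnear, hIccev] with τ hτU hτr hτI
    have hsub : {γ | γ ∈ G ∧ ev τ γ ∉ K} ⊆ ev τ ⁻¹' (Metric.cthickening r K \ K) := by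
      intro γ hγ
      exact ⟨hthick r τ hτI hτr γ hγ.1, hγ.2⟩
    have hAmeas : MeasurableSet (Metric.cthickening r K \ K) :=
      Metric.isClosed_cthickening.measurableSet.diff hKmeas
    calc P {γ | γ ∈ G ∧ ev τ γ ∉ K} ≤ P (ev τ ⁻¹' (Metric.cthickening r K \ K)) :=
          measure_mono hsub
      _ = Measure.map (ev τ) P (Metric.cthickening r K \ K) :=
          (Measure.map_apply (hevcont τ).measurable hAmeas).symm
      _ ≤ ENNReal.ofReal C * m (Metric.cthickening r K \ K) := hdens τ hτU _ hAmeas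
      _ ≤ ENNReal.ofReal C * η := mul_le_mul_right hmdiff _
      _ = ENNReal.ofReal δ := by
          rw [hηdef, ← ENNReal.ofReal_mul hC.le, mul_comm, div_mul_cancel₀ _ hC.ne']
  -- joint continuity and measurability
  have hjoint : Continuous fun p : ℝ × C(unitInterval, X) => ev p.1 p.2 := by
    have hc : Continuous fun p : C(unitInterval, X) × unitInterval => p.1 p.2 := continuous_eval
    have h2 : Continuous fun p : ℝ × C(unitInterval, X) =>
        (p.2, Set.projIcc 0 1 zero_le_one p.1) :=
      continuous_snd.prodMk ((continuous_projIcc).comp continuous_fst)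
    exact hc.comp h2
  have hTmeas : MeasurableSet {p : ℝ × C(unitInterval, X) | ev p.1 p.2 ∈ K} :=
    (hKclosed.preimage hjoint).measurableSet
  obtain ⟨Aset, hAdef⟩ : ∃ A : ℕ → C(unitInterval, X) → Set ℝ, A = fun n γ =>
      {τ : ℝ | τ ∈ Set.Icc (0:ℝ) 1 ∧ ev τ γ ∈ K} ∩ Set.Ioo (t - ε n) (t + ε n) := ⟨_, rfl⟩
  obtain ⟨F, hFdef⟩ : ∃ F : ℕ → C(unitInterval, X) → ℝ≥0∞, F = fun n γ =>
      volume (Aset n γ) / ENNReal.ofReal (2 * ε n) := ⟨_, rfl⟩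
  have hvolJ : ∀ n, volume (Set.Ioo (t - ε n) (t + ε n)) = ENNReal.ofReal (2 * ε n) := by
    intro n; rw [Real.volume_Ioo]; congr 1; ring
  have hT2meas : MeasurableSet {p : ℝ × C(unitInterval, X) |
      p.1 ∈ Set.Icc (0:ℝ) 1 ∧ ev p.1 p.2 ∈ K} := by
    have heq : {p : ℝ × C(unitInterval, X) | p.1 ∈ Set.Icc (0:ℝ) 1 ∧ ev p.1 p.2 ∈ K}
        = (Prod.fst ⁻¹' Set.Icc (0:ℝ) 1) ∩ {p | ev p.1 p.2 ∈ K} := rfl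
    rw [heq]
    exact (measurableSet_Icc.preimage measurable_fst).inter hTmeas
  have hAmeas2 : ∀ n, MeasurableSet ({p : ℝ × C(unitInterval, X) |
      p.1 ∈ Set.Icc (0:ℝ) 1 ∧ ev p.1 p.2 ∈ K} ∩
      (Set.Ioo (t - ε n) (t + ε n) ×ˢ Set.univ)) := fun n =>
    hT2meas.inter (measurableSet_Ioo.prod MeasurableSet.univ)
  have hvolmeas : ∀ n, Measurable fun γ => volume (Aset n γ) := by
    intro n
    have hsec : ∀ γ : C(unitInterval, X), Aset n γ =
        (fun τ => (τ, γ)) ⁻¹' ({p : ℝ × C(unitInterval, X) |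
          p.1 ∈ Set.Icc (0:ℝ) 1 ∧ ev p.1 p.2 ∈ K} ∩
          (Set.Ioo (t - ε n) (t + ε n) ×ˢ Set.univ)) := by
      intro γ
      ext τ
      simp [hAdef, and_assoc]
    simp_rw [hsec]
    exact measurable_measure_prodMk_right (hAmeas2 n)
  have hFmeas : ∀ n, Measurable (F n) := by
    intro n
    simp only [hFdef]
    simp_rw [div_eq_mul_inv]
    exact (hvolmeas n).mul_const _
  have hFle : ∀ n γ, F n γ ≤ 1 := by
    intro n γ
    simp only [hFdef, hAdef]
    refine ENNReal.div_le_of_le_mul ?_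
    rw [one_mul, ← hvolJ n]
    exact measure_mono Set.inter_subset_right
  have hsecγ : ∀ γ : C(unitInterval, X), MeasurableSet {τ : ℝ | ev τ γ ∈ K} := by
    intro γ
    have hc : Continuous fun τ : ℝ => ev τ γ :=
      hjoint.comp (continuous_id.prodMk continuous_const)
    exact (hKclosed.preimage hc).measurableSet
  set P' := P.restrict G with hP'def
  have hkey : ∀ δ : ℝ, 0 < δ → ∀ᶠ n in atTop,
      P G - ENNReal.ofReal δ ≤ ∫⁻ γ, F n γ ∂P' := by
    intro δ hδ
    obtain ⟨ρ, hρ0, hρ⟩ : ∃ ρ > 0, ∀ τ ∈ Set.Icc (0:ℝ) 1, |τ - t| < ρ →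
        P {γ | γ ∈ G ∧ ev τ γ ∉ K} ≤ ENNReal.ofReal δ := by
      have h2 := hsmall δ hδ
      rw [eventually_nhdsWithin_iff, Metric.eventually_nhds_iff] at h2
      obtain ⟨ρ, hρ0, h⟩ := h2
      exact ⟨ρ, hρ0, fun τ hτ hlt => h (show dist τ t < ρ by rwa [Real.dist_eq]) hτ⟩
    have hρ'0 : 0 < min ρ (min t (1 - t)) :=
      lt_min hρ0 (lt_min ht.1 (by linarith [ht.2]))
    have hev : ∀ᶠ n in atTop, ε n < min ρ (min t (1 - t)) :=
      hεlim.eventually_lt_const hρ'0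
    filter_upwards [hev] with n hn
    have hεt : ε n ≤ t := le_trans hn.le (le_trans (min_le_right _ _) (min_le_left _ _))
    have hε1t : ε n ≤ 1 - t := le_trans hn.le (le_trans (min_le_right _ _) (min_le_right _ _))
    have hερ : ε n ≤ ρ := le_trans hn.le (min_le_left _ _)
    have hJIcc : Set.Ioo (t - ε n) (t + ε n) ⊆ Set.Icc (0:ℝ) 1 := by
      rintro τ ⟨h1, h2⟩
      exact ⟨by linarith, by linarith⟩
    have hτbd : ∀ τ ∈ Set.Ioo (t - ε n) (t + ε n),
        P G - ENNReal.ofReal δ ≤ P' {γ | ev τ γ ∈ K} := by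
      intro τ hτ
      have habs : |τ - t| < ρ := by
        rw [abs_sub_lt_iff]
        obtain ⟨h1, h2⟩ := hτ
        constructor <;> [linarith; linarith]
      have hb := hρ τ (hJIcc hτ) habs
      have h2 : P G ≤ P' {γ | ev τ γ ∈ K} + P {γ | γ ∈ G ∧ ev τ γ ∉ K} := by
        rw [hP'def, Measure.restrict_apply' hGmeas]
        refine le_trans (measure_mono ?_) (measure_union_le _ _)
        intro γ hγ
        by_cases hc : ev τ γ ∈ K
        · exact Or.inl ⟨hc, hγ⟩
        · exact Or.inr ⟨hγ, hc⟩
      exact tsub_le_iff_right.2 (le_trans h2 (add_le_add le_rfl hb))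
    have hressec : ∀ γ : C(unitInterval, X),
        (volume.restrict (Set.Ioo (t - ε n) (t + ε n))) {τ : ℝ | ev τ γ ∈ K}
          = volume (Aset n γ) := by
      intro γ
      rw [Measure.restrict_apply (hsecγ γ)]
      congr 1
      ext τ
      simp only [hAdef, Set.mem_inter_iff, Set.mem_setOf_eq]
      constructor
      · rintro ⟨h1, h2⟩
        exact ⟨⟨hJIcc h2, h1⟩, h2⟩
      · rintro ⟨⟨_, h1⟩, h2⟩
        exact ⟨h1, h2⟩
    have htonelli : ∫⁻ γ, volume (Aset n γ) ∂P'
        = ∫⁻ τ in Set.Ioo (t - ε n) (t + ε n),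
            P' {γ | ev τ γ ∈ K} ∂volume := by
      have h1 := Measure.prod_apply
        (μ := volume.restrict (Set.Ioo (t - ε n) (t + ε n))) (ν := P') hTmeas
      have h2 := Measure.prod_apply_symm
        (μ := volume.restrict (Set.Ioo (t - ε n) (t + ε n))) (ν := P') hTmeas
      rw [h1] at h2
      calc ∫⁻ γ, volume (Aset n γ) ∂P'
          = ∫⁻ γ, (volume.restrict (Set.Ioo (t - ε n) (t + ε n)))
              ((fun τ => (τ, γ)) ⁻¹' {p : ℝ × C(unitInterval, X) | ev p.1 p.2 ∈ K}) ∂P' := by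
            congr 1
            ext γ
            exact (hressec γ).symm
        _ = ∫⁻ τ, P' (Prod.mk τ ⁻¹' {p : ℝ × C(unitInterval, X) | ev p.1 p.2 ∈ K})
              ∂(volume.restrict (Set.Ioo (t - ε n) (t + ε n))) := h2.symm
        _ = _ := rfl
    have hlow : (P G - ENNReal.ofReal δ) * ENNReal.ofReal (2 * ε n)
        ≤ ∫⁻ γ, volume (Aset n γ) ∂P' := by
      rw [htonelli]
      have hh : ∀ᵐ τ ∂(volume.restrict (Set.Ioo (t - ε n) (t + ε n))),
          P G - ENNReal.ofReal δ ≤ P' {γ | ev τ γ ∈ K} :=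
        (ae_restrict_iff' measurableSet_Ioo).2 (ae_of_all _ hτbd)
      calc (P G - ENNReal.ofReal δ) * ENNReal.ofReal (2 * ε n)
          = ∫⁻ _ in Set.Ioo (t - ε n) (t + ε n), (P G - ENNReal.ofReal δ) ∂volume := by
            rw [setLIntegral_const, hvolJ n]
        _ ≤ _ := lintegral_mono_ae hh
    have hInt : ∫⁻ γ, F n γ ∂P'
        = (∫⁻ γ, volume (Aset n γ) ∂P') / ENNReal.ofReal (2 * ε n) := by
      simp only [hFdef]
      simp_rw [div_eq_mul_inv]
      exact lintegral_mul_const _ (hvolmeas n)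
    rw [hInt]
    have hne0 : ENNReal.ofReal (2 * ε n) ≠ 0 :=
      (ENNReal.ofReal_pos.2 (by have := hεpos n; positivity)).ne'
    calc P G - ENNReal.ofReal δ
        = (P G - ENNReal.ofReal δ) * ENNReal.ofReal (2 * ε n) / ENNReal.ofReal (2 * ε n) := by
          rw [mul_div_assoc, ENNReal.div_self hne0 ENNReal.ofReal_ne_top, mul_one]
      _ ≤ _ := ENNReal.div_le_div_right hlow _
  have hliminf : P G ≤ liminf (fun n => ∫⁻ γ, F n γ ∂P') atTop := by
    refine ENNReal.le_of_forall_pos_le_add fun δ hδ _ => ?_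
    have h1 : P G - ENNReal.ofReal (δ:ℝ) ≤ liminf (fun n => ∫⁻ γ, F n γ ∂P') atTop :=
      le_liminf_of_le (by isBoundedDefault) (hkey (δ:ℝ) (by exact_mod_cast hδ))
    have h2 := tsub_le_iff_right.1 h1
    rwa [ENNReal.ofReal_coe_nnreal] at h2
  have hIls : P G ≤ limsup (fun n => ∫⁻ γ, F n γ ∂P') atTop :=
    le_trans hliminf liminf_le_limsup
  have hrev := limsup_lintegral_le (μ := P') (f := F) (fun _ => (1:ℝ≥0∞)) hFmeas
      (fun n => Filter.Eventually.of_forall fun γ => hFle n γ)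
      (by simp only [lintegral_one]; exact measure_ne_top P' Set.univ)
  obtain ⟨g, hgdef⟩ : ∃ g : C(unitInterval, X) → ℝ≥0∞,
      g = fun γ => limsup (fun n => F n γ) atTop := ⟨_, rfl⟩
  have hgmeas : Measurable g := hgdef ▸ Measurable.limsup hFmeas
  have hgle1 : ∀ γ, g γ ≤ 1 := fun γ => hgdef ▸
    limsup_le_of_le (by isBoundedDefault) (Filter.Eventually.of_forall fun n => hFle n γ)
  have hintg : ∫⁻ γ, g γ ∂P' = P G := by
    refine le_antisymm ?_ (le_trans hIls (by rw [hgdef] at *; exact hrev))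
    calc ∫⁻ γ, g γ ∂P' ≤ ∫⁻ _, 1 ∂P' := lintegral_mono hgle1
      _ = P G := by
        rw [lintegral_one, hP'def, Measure.restrict_apply_univ]
  have hae : ∀ᵐ γ ∂P', g γ = 1 := by
    have hsubint : ∫⁻ γ, (1 - g γ) ∂P' = 0 := by
      rw [lintegral_sub hgmeas (by rw [hintg]; exact measure_ne_top P G)
        (Filter.Eventually.of_forall hgle1), hintg, lintegral_one,
        Measure.restrict_apply_univ, tsub_self]
    have h0 := (lintegral_eq_zero_iff (measurable_const.sub hgmeas)).1 hsubint
    filter_upwards [h0] with γ hγ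
    simp only [Pi.zero_apply] at hγ
    exact le_antisymm (hgle1 γ) (tsub_eq_zero_iff_le.1 hγ)
  refine ⟨G ∩ {γ | g γ ≠ 1}, Set.inter_subset_left, ?_, ?_⟩
  · have heq : P (G ∩ {γ | g γ ≠ 1}) = P' {γ | g γ ≠ 1} := by
      rw [hP'def, Measure.restrict_apply' hGmeas, Set.inter_comm]
    rw [heq]
    exact ae_iff.1 hae
  · rintro γ ⟨hγG, hγH⟩
    have hg1 : g γ = 1 := by
      by_contra hne
      exact hγH ⟨hγG, hne⟩
    have hform : (fun n : ℕ => (volume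
        ({τ : ℝ | τ ∈ Set.Icc (0:ℝ) 1 ∧ ev τ γ ∈ K} ∩
          Set.Ioo (t - ε n) (t + ε n))).toReal / (2 * ε n)) = fun n => (F n γ).toReal := by
      funext n
      simp only [hFdef, hAdef]
      rw [ENNReal.toReal_div, ENNReal.toReal_ofReal (by have := hεpos n; positivity)]
    rw [hform]
    exact bridge_limsup_toReal (fun n => hFle n γ) (by rw [hgdef] at hg1; exact hg1)
end

section
/- Fix t ∈ (0,1). Assume there exist a constant C > 0 and a neighborhood U ⊆ [0,1] of t such that μ_τ(A) ≤ C·m(A) for every Borel set A ⊆ X and every τ ∈ U, and assume m(e_t(G)^{ε₀}) < ∞ for some ε₀ > 0. Then lim_{s→0} 𝛄({γ ∈ G : γ_{t+s} ∉ e_t(G)}) = 0; in other words, the 𝛄-measure of the set of curves in the support of 𝛄 whose position at time t+s lies outside e_t(G) tends to 0 as s → 0. -/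
open MeasureTheory Set Filter Metric

/-- Under the bounded-density assumption near `t ∈ (0,1)`, the `P`-measure
of the set of curves in `G` whose position at time `t + s` lies outside `e_t(G)` tends to
`0` as `s → 0`. -/
theorem mass_escaping_support_tendsto_zero
    {X : Type*} [MetricSpace X] [CompleteSpace X] [TopologicalSpace.SeparableSpace X]
    [MeasurableSpace X] [BorelSpace X]
    (m : MeasureTheory.Measure X)
    [MeasurableSpace C(unitInterval, X)] [BorelSpace C(unitInterval, X)]
    (P : MeasureTheory.Measure C(unitInterval, X)) [IsProbabilityMeasure P]
    (G : Set C(unitInterval, X)) (hGsupp : G = mSupport P)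
    (hGcpt : IsCompact G) (hGgeo : ∀ γ ∈ G, IsCSGeodesic γ)
    (t : ℝ) (ht : t ∈ Set.Ioo (0 : ℝ) 1)
    (C : ℝ) (hC : 0 < C)
    (U : Set ℝ) (hUsub : U ⊆ Set.Icc (0 : ℝ) 1) (hUnhds : U ∈ nhdsWithin t (Set.Icc (0 : ℝ) 1))
    (hdens : ∀ τ ∈ U, ∀ A : Set X, MeasurableSet A →
      MeasureTheory.Measure.map (ev τ) P A ≤ ENNReal.ofReal C * m A)
    (ε₀ : ℝ) (hε₀ : 0 < ε₀)
    (hfin : m (Metric.cthickening ε₀ (ev t '' G)) < ⊤) :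
    Filter.Tendsto (fun s : ℝ => P {γ | γ ∈ G ∧ ev (t + s) γ ∉ ev t '' G})
      (nhds 0) (nhds 0) := by

  have hev_cont : ∀ τ : ℝ, Continuous (ev τ : C(unitInterval, X) → X) :=
    fun τ => continuous_eval_const _
  set K : Set X := ev t '' G with hK
  have hKcpt : IsCompact K := hGcpt.image (hev_cont t)
  have hKclosed : IsClosed K := hKcpt.isClosed
  have hKfin : m K ≠ ⊤ :=
    ((measure_mono (self_subset_cthickening K)).trans_lt hfin).ne
  obtain ⟨D, hD0, hDbd⟩ : ∃ D : ℝ, 0 ≤ D ∧ ∀ γ ∈ G, dist (γ 0) (γ 1) ≤ D := by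
    rcases G.eq_empty_or_nonempty with hG | hG
    · exact ⟨0, le_rfl, fun γ hγ => absurd hγ (by simp [hG])⟩
    · have hc : Continuous fun γ : C(unitInterval, X) => dist (γ 0) (γ 1) :=
        (continuous_eval_const 0).dist (continuous_eval_const 1)
      obtain ⟨γ₀, hγ₀G, hmax⟩ := hGcpt.exists_isMaxOn hG hc.continuousOn
      exact ⟨max 0 (dist (γ₀ 0) (γ₀ 1)), le_max_left _ _,
        fun γ hγ => (hmax hγ).trans (le_max_right _ _)⟩
  rw [ENNReal.tendsto_nhds_zero]
  intro ε hε
  set C' := ENNReal.ofReal C with hC'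
  have hC'0 : C' ≠ 0 := by
    simp only [hC', ne_eq, ENNReal.ofReal_eq_zero, not_le]
    exact hC
  set ε' := ε / C' with hε'def
  have hε'0 : 0 < ε' := ENNReal.div_pos hε.ne' ENNReal.ofReal_ne_top
  have htend := tendsto_measure_cthickening_of_isClosed (μ := m)
    ⟨ε₀, hε₀, hfin.ne⟩ hKclosed
  have hlt : m K < m K + ε' := ENNReal.lt_add_right hKfin hε'0.ne'
  obtain ⟨δ₀, hδlt, hδpos⟩ :=
    (((htend.eventually_lt_const hlt).filter_mono
      (nhdsWithin_le_nhds (s := Set.Ioi (0:ℝ)))).and eventually_mem_nhdsWithin).exists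
  have hIcc : Set.Icc (0:ℝ) 1 ∈ nhds t :=
    Filter.mem_of_superset (isOpen_Ioo.mem_nhds ht) Set.Ioo_subset_Icc_self
  have hU : U ∈ nhds t := by rwa [nhdsWithin_eq_nhds.mpr hIcc] at hUnhds
  have h1 : Tendsto (fun s : ℝ => t + s) (nhds 0) (nhds t) := by
    simpa using (tendsto_const_nhds (x := t) (f := nhds (0:ℝ))).add tendsto_id
  have h2 : Tendsto (fun s : ℝ => |s| * D) (nhds 0) (nhds 0) := by
    simpa using (show Continuous (fun s : ℝ => |s| * D) from
      continuous_abs.mul continuous_const).tendsto (0:ℝ)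
  filter_upwards [h1.eventually_mem hU, h2.eventually (eventually_le_nhds hδpos)]
    with s hsU hsD
  have hts : t + s ∈ Set.Icc (0:ℝ) 1 := hUsub hsU
  set A : Set X := cthickening δ₀ K \ K with hA
  have hAm : MeasurableSet A :=
    (isClosed_cthickening.measurableSet).diff hKclosed.measurableSet
  have hsub : {γ | γ ∈ G ∧ ev (t + s) γ ∉ K} ⊆ (ev (t + s)) ⁻¹' A := by
    rintro γ ⟨hγG, hγK⟩
    refine ⟨?_, hγK⟩
    have hgeo := hGgeo γ hγG (Set.projIcc 0 1 zero_le_one (t+s)) (Set.projIcc 0 1 zero_le_one t)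
    have e1 : ((Set.projIcc 0 1 zero_le_one (t+s)) : ℝ) = t + s := by
      rw [Set.projIcc_of_mem _ hts]
    have e2 : ((Set.projIcc 0 1 zero_le_one t) : ℝ) = t := by
      rw [Set.projIcc_of_mem _ (Set.mem_Icc_of_Ioo ht)]
    have hdist : dist (ev (t+s) γ) (ev t γ) ≤ δ₀ := by
      rw [show ev (t+s) γ = γ (Set.projIcc 0 1 zero_le_one (t+s)) from rfl,
          show ev t γ = γ (Set.projIcc 0 1 zero_le_one t) from rfl, hgeo, e1, e2,
          show t + s - t = s by ring]
      calc |s| * dist (γ 0) (γ 1) ≤ |s| * D :=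
            mul_le_mul_of_nonneg_left (hDbd γ hγG) (abs_nonneg s)
        _ ≤ δ₀ := hsD
    exact mem_cthickening_of_dist_le _ _ _ _ (Set.mem_image_of_mem _ hγG) hdist
  calc P {γ | γ ∈ G ∧ ev (t + s) γ ∉ K}
      ≤ P ((ev (t+s)) ⁻¹' A) := measure_mono hsub
    _ = Measure.map (ev (t+s)) P A := (Measure.map_apply ((hev_cont _).measurable) hAm).symm
    _ ≤ C' * m A := hdens _ hsU A hAm
    _ ≤ C' * ε' := by
        gcongr
        have hd : m A = m (cthickening δ₀ K) - m K :=
          measure_diff (self_subset_cthickening K)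
            hKclosed.measurableSet.nullMeasurableSet hKfin
        rw [hd]
        exact tsub_le_iff_right.mpr (by rw [add_comm]; exact hδlt.le)
    _ ≤ ε := by
        rw [hε'def, ENNReal.mul_div_cancel hC'0 ENNReal.ofReal_ne_top]
end

section
/- Fix t ∈ (0,1). Assume there exist a constant C > 0 and a neighborhood U ⊆ [0,1] of t such that μ_τ(A) ≤ C·m(A) for every Borel set A ⊆ X and every τ ∈ U, and assume m(e_t(G)^{ε₀}) < ∞ for some ε₀ > 0. Then for every Borel set K ⊆ G one has lim_{ε→0⁺} (1/(2ε)) ∫_K ℒ¹(I_t(γ) ∩ (t−ε, t+ε)) 𝛄(dγ) = 𝛄(K). -/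
open MeasureTheory Set Filter Metric

/-- Under the bounded-density assumption near `t ∈ (0,1)`, for every Borel
set `K ⊆ G` one has
`lim_{ε → 0⁺} (1/(2ε)) ∫_K ℒ¹(I_t(γ) ∩ (t - ε, t + ε)) P(dγ) = P(K)`. -/
theorem averaged_density_on_subsets
    {X : Type*} [MetricSpace X] [CompleteSpace X] [TopologicalSpace.SeparableSpace X]
    [MeasurableSpace X] [BorelSpace X]
    (m : MeasureTheory.Measure X)
    [MeasurableSpace C(unitInterval, X)] [BorelSpace C(unitInterval, X)]
    (P : MeasureTheory.Measure C(unitInterval, X)) [IsProbabilityMeasure P]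
    (G : Set C(unitInterval, X)) (hGsupp : G = mSupport P)
    (hGcpt : IsCompact G) (hGgeo : ∀ γ ∈ G, IsCSGeodesic γ)
    (t : ℝ) (ht : t ∈ Set.Ioo (0 : ℝ) 1)
    (C : ℝ) (hC : 0 < C)
    (U : Set ℝ) (hUsub : U ⊆ Set.Icc (0 : ℝ) 1) (hUnhds : U ∈ nhdsWithin t (Set.Icc (0 : ℝ) 1))
    (hdens : ∀ τ ∈ U, ∀ A : Set X, MeasurableSet A →
      MeasureTheory.Measure.map (ev τ) P A ≤ ENNReal.ofReal C * m A)
    (ε₀ : ℝ) (hε₀ : 0 < ε₀)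
    (hfin : m (Metric.cthickening ε₀ (ev t '' G)) < ⊤) :
    ∀ K : Set C(unitInterval, X), MeasurableSet K → K ⊆ G →
      Filter.Tendsto
        (fun ε : ℝ => (1 / (2 * ε)) *
          ∫ γ in K, (MeasureTheory.volume
              ({τ : ℝ | τ ∈ Set.Icc (0 : ℝ) 1 ∧ ev τ γ ∈ ev t '' G} ∩
                Set.Ioo (t - ε) (t + ε))).toReal ∂P)
        (nhdsWithin 0 (Set.Ioi 0)) (nhds (P K).toReal) := by
  intro K hK hKG
  have hevc : ∀ τ : ℝ, Continuous (ev τ : C(unitInterval, X) → X) := fun τ =>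
    continuous_eval_const _
  set S : Set X := ev t '' G with hSdef
  have hScl : IsClosed S := (hGcpt.image (hevc t)).isClosed
  have hSm : MeasurableSet S := hScl.measurableSet
  have hjoint : Continuous fun p : C(unitInterval, X) × ℝ => ev p.2 p.1 := by
    have h1 : Continuous fun p : C(unitInterval, X) × ℝ =>
        ((p.1, Set.projIcc 0 1 zero_le_one p.2) : C(unitInterval, X) × unitInterval) :=
      continuous_fst.prodMk (continuous_projIcc.comp continuous_snd)
    exact continuous_eval.comp h1
  -- diameter bound
  obtain ⟨D, hD⟩ : ∃ D : ℝ, ∀ γ ∈ G, dist (γ 0) (γ 1) ≤ D := by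
    obtain ⟨D, hD⟩ := (hGcpt.image
      ((continuous_eval_const (0 : unitInterval)).dist
        (continuous_eval_const (1 : unitInterval)))).bddAbove
    exact ⟨D, fun γ hγ => hD (mem_image_of_mem _ hγ)⟩
  set D' : ℝ := max D 1 with hD'def
  have hD'pos : (0 : ℝ) < D' := lt_max_of_lt_right one_pos
  have hDle : ∀ γ ∈ G, dist (γ 0) (γ 1) ≤ D' := fun γ hγ => (hD γ hγ).trans (le_max_left _ _)
  have htI : t ∈ Icc (0 : ℝ) 1 := ⟨ht.1.le, ht.2.le⟩
  have hproj : ∀ τ ∈ Icc (0 : ℝ) 1,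
      ((Set.projIcc 0 1 zero_le_one τ : unitInterval) : ℝ) = τ := by
    intro τ hτ; rw [projIcc_of_mem _ hτ]
  have hkey : ∀ γ ∈ G, ∀ τ ∈ Icc (0 : ℝ) 1, dist (ev τ γ) (ev t γ) ≤ |τ - t| * D' := by
    intro γ hγ τ hτ
    have h1 := hGgeo γ hγ (Set.projIcc 0 1 zero_le_one τ) (Set.projIcc 0 1 zero_le_one t)
    simp only [ev]
    rw [h1, hproj τ hτ, hproj t htI]
    exact mul_le_mul_of_nonneg_left (hDle γ hγ) (abs_nonneg _)
  -- neighborhood data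
  obtain ⟨V, hVopen, htV, hVU⟩ : ∃ V, IsOpen V ∧ t ∈ V ∧ V ∩ Icc (0 : ℝ) 1 ⊆ U := by
    rcases mem_nhdsWithin.1 hUnhds with ⟨V, hVo, htV, hsub⟩
    exact ⟨V, hVo, htV, hsub⟩
  obtain ⟨δ, hδpos, hball⟩ := Metric.isOpen_iff.1 hVopen t htV
  set ε₁ : ℝ := min (min t (1 - t)) (min (δ / 2) (ε₀ / D')) with hε₁def
  have hε₁pos : 0 < ε₁ := by
    refine lt_min (lt_min ht.1 (by linarith [ht.2])) (lt_min (by linarith) (by positivity))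
  set l := nhdsWithin (0 : ℝ) (Ioi 0) with hldef
  -- the "bad" sets
  set sSet : ℝ → Set (C(unitInterval, X) × ℝ) := fun ε =>
    {p | p.2 ∈ Ioo (t - ε) (t + ε) ∧ ev p.2 p.1 ∉ S} with hsSetdef
  have hsmeas : ∀ ε : ℝ, MeasurableSet (sSet ε) := by
    intro ε
    have h1 : MeasurableSet {p : C(unitInterval, X) × ℝ | p.2 ∈ Ioo (t - ε) (t + ε)} :=
      measurable_snd measurableSet_Ioo
    have h2 : MeasurableSet {p : C(unitInterval, X) × ℝ | ev p.2 p.1 ∈ S} :=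
      hjoint.measurable hSm
    exact h1.inter h2.compl
  set Φ : ℝ → C(unitInterval, X) → Set ℝ := fun ε γ => Prod.mk γ ⁻¹' sSet ε with hΦdef
  have hbadmeas : ∀ ε γ, MeasurableSet (Φ ε γ) := fun ε γ =>
    measurable_prodMk_left (hsmeas ε)
  have hΦmeas : ∀ ε : ℝ, Measurable fun γ => volume (Φ ε γ) := fun ε =>
    measurable_measure_prodMk_left (hsmeas ε)
  have hΦle : ∀ ε : ℝ, 0 < ε → ∀ γ, volume (Φ ε γ) ≤ ENNReal.ofReal (2 * ε) := by
    intro ε hε γ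
    calc volume (Φ ε γ) ≤ volume (Ioo (t - ε) (t + ε)) := measure_mono fun τ hτ => hτ.1
    _ = ENNReal.ofReal (2 * ε) := by rw [Real.volume_Ioo]; congr 1; ring
  set q : ℝ → ℝ := fun ε => (1 / (2 * ε)) * (∫⁻ γ in K, volume (Φ ε γ) ∂P).toReal with hqdef
  -- (E1): rewrite the average as P(K) - q ε
  have hE1 : ∀ᶠ ε in l, (1 / (2 * ε)) *
      ∫ γ in K, (volume ({τ : ℝ | τ ∈ Icc (0 : ℝ) 1 ∧ ev τ γ ∈ S} ∩
        Ioo (t - ε) (t + ε))).toReal ∂P = (P K).toReal - q ε := by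
    filter_upwards [self_mem_nhdsWithin, Ioc_mem_nhdsGT hε₁pos] with ε hε hεle
    have hεpos : (0 : ℝ) < ε := hε
    have hεt : ε ≤ t := hεle.2.trans ((min_le_left _ _).trans (min_le_left _ _))
    have hεt' : ε ≤ 1 - t := hεle.2.trans ((min_le_left _ _).trans (min_le_right _ _))
    have hIooIcc : Ioo (t - ε) (t + ε) ⊆ Icc (0 : ℝ) 1 := fun τ hτ =>
      ⟨by linarith [hτ.1], by linarith [hτ.2]⟩
    have hsetid : ∀ γ : C(unitInterval, X),
        {τ : ℝ | τ ∈ Icc (0 : ℝ) 1 ∧ ev τ γ ∈ S} ∩ Ioo (t - ε) (t + ε)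
          = Ioo (t - ε) (t + ε) \ Φ ε γ := by
      intro γ; ext τ
      constructor
      · rintro ⟨⟨_, hS'⟩, hIoo⟩
        exact ⟨hIoo, fun h => h.2 hS'⟩
      · rintro ⟨hIoo, hnot⟩
        have hin : ev τ γ ∈ S := by
          by_contra h; exact hnot ⟨hIoo, h⟩
        exact ⟨⟨hIooIcc hIoo, hin⟩, hIoo⟩
    have hptw : ∀ γ : C(unitInterval, X),
        (volume ({τ : ℝ | τ ∈ Icc (0 : ℝ) 1 ∧ ev τ γ ∈ S} ∩ Ioo (t - ε) (t + ε))).toReal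
          = 2 * ε - (volume (Φ ε γ)).toReal := by
      intro γ
      rw [hsetid γ, measure_diff (fun τ hτ => hτ.1) (hbadmeas ε γ).nullMeasurableSet
        (lt_of_le_of_lt (hΦle ε hεpos γ) ENNReal.ofReal_lt_top).ne, Real.volume_Ioo,
        show t + ε - (t - ε) = 2 * ε by ring,
        ENNReal.toReal_sub_of_le (hΦle ε hεpos γ) ENNReal.ofReal_ne_top,
        ENNReal.toReal_ofReal (by positivity)]
    have hint : Integrable (fun γ => (volume (Φ ε γ)).toReal) (P.restrict K) := by
      refine ⟨((hΦmeas ε).ennreal_toReal).aestronglyMeasurable, ?_⟩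
      refine HasFiniteIntegral.of_bounded (C := 2 * ε) (ae_of_all _ fun γ => ?_)
      rw [Real.norm_eq_abs, abs_of_nonneg ENNReal.toReal_nonneg]
      calc (volume (Φ ε γ)).toReal ≤ (ENNReal.ofReal (2 * ε)).toReal :=
          ENNReal.toReal_mono ENNReal.ofReal_ne_top (hΦle ε hεpos γ)
        _ = 2 * ε := ENNReal.toReal_ofReal (by positivity)
    have hsplit : ∫ γ in K, (volume ({τ : ℝ | τ ∈ Icc (0 : ℝ) 1 ∧ ev τ γ ∈ S} ∩
        Ioo (t - ε) (t + ε))).toReal ∂P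
        = 2 * ε * (P K).toReal - (∫⁻ γ in K, volume (Φ ε γ) ∂P).toReal := by
      rw [integral_congr_ae (ae_of_all _ hptw), integral_sub (integrable_const _) hint,
        setIntegral_const, integral_toReal ((hΦmeas ε).aemeasurable)
          (ae_of_all _ fun γ => lt_of_le_of_lt (hΦle ε hεpos γ) ENNReal.ofReal_lt_top)]
      simp [smul_eq_mul]; rw [measureReal_def]; ring
    have hq' : q ε = 1 / (2 * ε) * (∫⁻ γ in K, volume (Φ ε γ) ∂P).toReal := rfl
    rw [hsplit, hq', mul_sub]
    congr 1
    field_simp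
  -- per-τ density bound and Tonelli, giving (E2)
  have hqnn : ∀ᶠ ε in l, 0 ≤ q ε := by
    filter_upwards [self_mem_nhdsWithin] with ε hε
    have : (0 : ℝ) < ε := hε
    exact mul_nonneg (by positivity) ENNReal.toReal_nonneg
  have hE2 : ∀ᶠ ε in l, q ε ≤ C * (m (cthickening (D' * ε) S \ S)).toReal := by
    filter_upwards [self_mem_nhdsWithin, Ioc_mem_nhdsGT hε₁pos] with ε hε hεle
    have hεpos : (0 : ℝ) < ε := hε
    have hεt : ε ≤ t := hεle.2.trans ((min_le_left _ _).trans (min_le_left _ _))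
    have hεt' : ε ≤ 1 - t := hεle.2.trans ((min_le_left _ _).trans (min_le_right _ _))
    have hεδ : ε ≤ δ / 2 := hεle.2.trans ((min_le_right _ _).trans (min_le_left _ _))
    have hεε₀ : D' * ε ≤ ε₀ := by
      have h := hεle.2.trans ((min_le_right _ _).trans (min_le_right _ _))
      calc D' * ε ≤ D' * (ε₀ / D') := by nlinarith
        _ = ε₀ := by field_simp
    have hIooIcc : Ioo (t - ε) (t + ε) ⊆ Icc (0 : ℝ) 1 := fun τ hτ =>
      ⟨by linarith [hτ.1], by linarith [hτ.2]⟩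
    have hIooU : Ioo (t - ε) (t + ε) ⊆ U := by
      intro τ hτ
      refine hVU ⟨hball ?_, hIooIcc hτ⟩
      rw [Metric.mem_ball, Real.dist_eq]
      have h1 : |τ - t| < ε := abs_sub_lt_iff.2 ⟨by linarith [hτ.2], by linarith [hτ.1]⟩
      linarith
    have hmeasdiff : MeasurableSet (cthickening (D' * ε) S \ S) :=
      (isClosed_cthickening.measurableSet).diff hSm
    set c : ENNReal := ENNReal.ofReal C * m (cthickening (D' * ε) S \ S) with hcdef
    have hmfin : m (cthickening (D' * ε) S \ S) ≠ ⊤ := by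
      refine (lt_of_le_of_lt (measure_mono ?_) hfin).ne
      exact diff_subset.trans (cthickening_mono hεε₀ S)
    have hcfin : c ≠ ⊤ := ENNReal.mul_ne_top ENNReal.ofReal_ne_top hmfin
    have hτbound : ∀ τ : ℝ, (P.restrict K) ((fun γ => (γ, τ)) ⁻¹' sSet ε)
        ≤ (Ioo (t - ε) (t + ε)).indicator (fun _ => c) τ := by
      intro τ
      by_cases hτ : τ ∈ Ioo (t - ε) (t + ε)
      · rw [indicator_of_mem hτ]
        have hseteq : ((fun γ => (γ, τ)) ⁻¹' sSet ε) = ((ev τ) ⁻¹' S)ᶜ := by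
          ext γ; exact ⟨fun h => h.2, fun h => ⟨hτ, h⟩⟩
        have hsub : ((ev τ) ⁻¹' S)ᶜ ∩ K ⊆ (ev τ) ⁻¹' (cthickening (D' * ε) S \ S) := by
          rintro γ ⟨hγS, hγK⟩
          have hγG := hKG hγK
          refine ⟨?_, hγS⟩
          refine mem_cthickening_of_dist_le (ev τ γ) (ev t γ) _ _
            (mem_image_of_mem _ hγG) ?_
          calc dist (ev τ γ) (ev t γ) ≤ |τ - t| * D' := hkey γ hγG τ (hIooIcc hτ)
            _ ≤ ε * D' := by
                have h1 : |τ - t| ≤ ε :=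
                  (abs_sub_lt_iff.2 ⟨by linarith [hτ.2], by linarith [hτ.1]⟩).le
                exact mul_le_mul_of_nonneg_right h1 hD'pos.le
            _ = D' * ε := by ring
        calc (P.restrict K) ((fun γ => (γ, τ)) ⁻¹' sSet ε)
            = P (((ev τ) ⁻¹' S)ᶜ ∩ K) := by
              rw [hseteq, Measure.restrict_apply (((hevc τ).measurable hSm).compl)]
          _ ≤ P ((ev τ) ⁻¹' (cthickening (D' * ε) S \ S)) := measure_mono hsub
          _ = Measure.map (ev τ) P (cthickening (D' * ε) S \ S) :=
              (Measure.map_apply (hevc τ).measurable hmeasdiff).symm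
          _ ≤ c := hdens τ (hIooU hτ) _ hmeasdiff
      · rw [indicator_of_notMem hτ]
        have hseteq : ((fun γ => (γ, τ)) ⁻¹' sSet ε) = (∅ : Set C(unitInterval, X)) := by
          ext γ; exact ⟨fun h => hτ h.1, fun h => h.elim⟩
        simp [hseteq]
    have hswap : ∫⁻ γ in K, volume (Φ ε γ) ∂P
        = ∫⁻ τ, (P.restrict K) ((fun γ => (γ, τ)) ⁻¹' sSet ε) ∂volume := by
      have h1 : ∀ γ, volume (Φ ε γ)
          = ∫⁻ τ, (sSet ε).indicator (fun _ => (1 : ENNReal)) (γ, τ) ∂volume := by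
        intro γ
        rw [← lintegral_indicator_one (hbadmeas ε γ)]
        congr 1
      have h2 : ∀ τ, (P.restrict K) ((fun γ => (γ, τ)) ⁻¹' sSet ε)
          = ∫⁻ γ, (sSet ε).indicator (fun _ => (1 : ENNReal)) (γ, τ) ∂(P.restrict K) := by
        intro τ
        rw [← lintegral_indicator_one
          ((hsmeas ε).preimage (measurable_prodMk_right : Measurable fun γ => (γ, τ)))]
        congr 1
      simp_rw [h1, h2]
      exact lintegral_lintegral_swap
        ((measurable_one.indicator (hsmeas ε)).aemeasurable)
    have hL : (∫⁻ γ in K, volume (Φ ε γ) ∂P) ≤ ENNReal.ofReal (2 * ε) * c := by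
      rw [hswap]
      calc ∫⁻ τ, (P.restrict K) ((fun γ => (γ, τ)) ⁻¹' sSet ε) ∂volume
          ≤ ∫⁻ τ, (Ioo (t - ε) (t + ε)).indicator (fun _ => c) τ ∂volume :=
            lintegral_mono hτbound
        _ = c * volume (Ioo (t - ε) (t + ε)) := lintegral_indicator_const measurableSet_Ioo c
        _ = ENNReal.ofReal (2 * ε) * c := by
            rw [Real.volume_Ioo, show t + ε - (t - ε) = 2 * ε by ring, mul_comm]
    have hLr : (∫⁻ γ in K, volume (Φ ε γ) ∂P).toReal
        ≤ 2 * ε * (C * (m (cthickening (D' * ε) S \ S)).toReal) := by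
      have h1 := ENNReal.toReal_mono
        (ENNReal.mul_ne_top ENNReal.ofReal_ne_top hcfin) hL
      rw [ENNReal.toReal_mul, ENNReal.toReal_ofReal (by positivity), hcdef,
        ENNReal.toReal_mul, ENNReal.toReal_ofReal hC.le] at h1
      linarith
    calc q ε ≤ (1 / (2 * ε)) * (2 * ε * (C * (m (cthickening (D' * ε) S \ S)).toReal)) :=
        mul_le_mul_of_nonneg_left hLr (by positivity)
      _ = C * (m (cthickening (D' * ε) S \ S)).toReal := by field_simp
  -- the bound tends to 0
  have hmSfin : m S ≠ ⊤ :=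
    (lt_of_le_of_lt (measure_mono (self_subset_cthickening S)) hfin).ne
  have hthick : Tendsto (fun r : ℝ => m (cthickening r S)) (nhds 0) (nhds (m S)) :=
    tendsto_measure_cthickening_of_isClosed ⟨ε₀, hε₀, hfin.ne⟩ hScl
  have hdiffT : Tendsto (fun r : ℝ => m (cthickening r S \ S)) (nhds 0) (nhds 0) := by
    have h1 : (fun r : ℝ => m (cthickening r S \ S))
        = fun r : ℝ => m (cthickening r S) - m S := by
      funext r
      exact measure_diff (self_subset_cthickening S) hSm.nullMeasurableSet hmSfin
    rw [h1]
    have h2 : Tendsto (fun r : ℝ => m (cthickening r S) - m S) (nhds 0)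
        (nhds (m S - m S)) :=
      ENNReal.Tendsto.sub hthick tendsto_const_nhds (Or.inr hmSfin)
    simpa [tsub_self] using h2
  have hDε : Tendsto (fun ε : ℝ => D' * ε) l (nhds 0) := by
    have h1 : Tendsto (fun ε : ℝ => D' * ε) (nhds 0) (nhds (D' * 0)) :=
      tendsto_const_nhds.mul tendsto_id
    simpa [mul_zero] using h1.mono_left nhdsWithin_le_nhds
  have hT3 : Tendsto (fun ε => C * (m (cthickening (D' * ε) S \ S)).toReal) l (nhds 0) := by
    have h3 : Tendsto (fun ε : ℝ => m (cthickening (D' * ε) S \ S)) l (nhds 0) :=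
      hdiffT.comp hDε
    have h4 : Tendsto (fun ε : ℝ => (m (cthickening (D' * ε) S \ S)).toReal) l (nhds 0) := by
      have := (ENNReal.tendsto_toReal (a := 0) (by simp)).comp h3
      simpa [Function.comp_def] using this
    simpa [mul_zero] using h4.const_mul C
  have hq0 : Tendsto q l (nhds 0) := squeeze_zero' hqnn hE2 hT3
  have hfinal : Tendsto (fun ε => (P K).toReal - q ε) l (nhds ((P K).toReal)) := by
    simpa using tendsto_const_nhds.sub hq0
  exact Tendsto.congr' (hE1.mono fun ε h => h.symm) hfinal
end

section
/- Fix t ∈ (0,1). Suppose H ⊆ G is a Borel set with 𝛄(H) > 0 and α > 0 is such that liminf_{ε→0⁺} ℒ¹(I_t^c(γ) ∩ (t−ε, t+ε))/(2ε) > α for every γ ∈ H, where I_t^c(γ) := [0,1] ∖ I_t(γ). Then there exist a constant c > 0 and a sequence (s_n) of reals with s_n → 0 such that 𝛄({γ ∈ H : t + s_n ∈ I_t^c(γ)}) ≥ c for all n. -/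
open MeasureTheory Set Filter Metric

/-- If `H ⊆ G` has positive `P`-measure and for every `γ ∈ H` the lower
density of the complement `I_t^c(γ) = [0,1] \ I_t(γ)` at `t` exceeds `α > 0`, then there
are `c > 0` and a sequence `s_n → 0` with `P({γ ∈ H : t + s_n ∈ I_t^c(γ)}) ≥ c` for all
`n`. -/
theorem positive_measure_slices_of_complement
    {X : Type*} [MetricSpace X] [CompleteSpace X] [TopologicalSpace.SeparableSpace X]
    [MeasurableSpace C(unitInterval, X)] [BorelSpace C(unitInterval, X)]
    (P : MeasureTheory.Measure C(unitInterval, X)) [IsProbabilityMeasure P]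
    (G : Set C(unitInterval, X)) (hGsupp : G = mSupport P)
    (hGcpt : IsCompact G) (hGgeo : ∀ γ ∈ G, IsCSGeodesic γ)
    (t : ℝ) (ht : t ∈ Set.Ioo (0 : ℝ) 1)
    (H : Set C(unitInterval, X)) (hHsub : H ⊆ G) (hHmeas : MeasurableSet H)
    (hHpos : 0 < P H)
    (α : ℝ) (hα : 0 < α)
    (hlb : ∀ γ ∈ H, α < Filter.liminf
        (fun ε : ℝ => (MeasureTheory.volume
            ((Set.Icc (0 : ℝ) 1 \ {τ : ℝ | τ ∈ Set.Icc (0 : ℝ) 1 ∧ ev τ γ ∈ ev t '' G}) ∩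
              Set.Ioo (t - ε) (t + ε))).toReal / (2 * ε))
        (nhdsWithin 0 (Set.Ioi 0))) :
    ∃ c : ℝ, 0 < c ∧ ∃ s : ℕ → ℝ, Filter.Tendsto s Filter.atTop (nhds 0) ∧
      ∀ n : ℕ, ENNReal.ofReal c ≤
        P {γ | γ ∈ H ∧ t + s n ∈
          Set.Icc (0 : ℝ) 1 \ {τ : ℝ | τ ∈ Set.Icc (0 : ℝ) 1 ∧ ev τ γ ∈ ev t '' G}} := by

  classical
  obtain ⟨ht0, ht1⟩ := ht
  set K : Set X := ev t '' G with hK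
  have hKcl : IsClosed K := by
    have hc : Continuous fun γ : C(unitInterval, X) => ev t γ :=
      continuous_eval_const (Set.projIcc 0 1 zero_le_one t)
    exact (hGcpt.image hc).isClosed
  set S : Set (C(unitInterval, X) × ℝ) :=
    {p | p.2 ∈ Set.Icc (0:ℝ) 1 ∧ ev p.2 p.1 ∉ K} with hSdef
  have hevcont : Continuous fun p : C(unitInterval, X) × ℝ => ev p.2 p.1 := by
    have h1 : Continuous fun p : C(unitInterval, X) × ℝ =>
        (p.1, Set.projIcc (0:ℝ) 1 zero_le_one p.2) :=
      continuous_fst.prodMk (continuous_projIcc.comp continuous_snd)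
    exact ContinuousEval.continuous_eval.comp h1
  have hSmeas : MeasurableSet S := by
    have h1 : MeasurableSet {p : C(unitInterval, X) × ℝ | p.2 ∈ Set.Icc (0:ℝ) 1} :=
      measurable_snd measurableSet_Icc
    have h2 : MeasurableSet {p : C(unitInterval, X) × ℝ | ev p.2 p.1 ∈ K} :=
      (hKcl.preimage hevcont).measurableSet
    exact h1.inter h2.compl
  have hslice : ∀ γ : C(unitInterval, X), Prod.mk γ ⁻¹' S =
      Set.Icc (0:ℝ) 1 \ {τ : ℝ | τ ∈ Set.Icc (0:ℝ) 1 ∧ ev τ γ ∈ K} := by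
    intro γ; ext τ
    simp only [hSdef, Set.mem_preimage, Set.mem_setOf_eq, Set.mem_diff]
    tauto
  have hslicemeas : ∀ γ : C(unitInterval, X), MeasurableSet (Prod.mk γ ⁻¹' S) :=
    fun γ => hSmeas.preimage measurable_prodMk_left
  -- the sequence of radii
  set e : ℕ → ℝ := fun m => 1 / (m + 1) with he
  have hepos : ∀ m, 0 < e m := fun m => by positivity
  -- the sets H_k
  set F : C(unitInterval, X) → ℕ → ENNReal :=
    fun γ m => volume (Prod.mk γ ⁻¹' S ∩ Set.Ioo (t - e m) (t + e m)) with hFdef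
  have hFmeas : ∀ m, Measurable fun γ => F γ m := by
    intro m
    have : (fun γ => F γ m) =
        fun γ => (volume.restrict (Set.Ioo (t - e m) (t + e m))) (Prod.mk γ ⁻¹' S) := by
      funext γ
      rw [Measure.restrict_apply (hslicemeas γ)]
    rw [this]
    exact measurable_measure_prodMk_left hSmeas
  set Hk : ℕ → Set C(unitInterval, X) :=
    fun k => H ∩ ⋂ m, ⋂ _ : k ≤ m, {γ | ENNReal.ofReal (2 * α * e m) ≤ F γ m} with hHk
  have hHkmeas : ∀ k, MeasurableSet (Hk k) := by
    intro k
    exact hHmeas.inter (MeasurableSet.iInter fun m => MeasurableSet.iInter fun _ =>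
      measurableSet_le measurable_const (hFmeas m))
  have hHksub : ∀ k, Hk k ⊆ H := fun k => Set.inter_subset_left
  -- covering
  have hcover : H ⊆ ⋃ k, Hk k := by
    intro γ hγ
    have hbdd : Filter.IsBoundedUnder (· ≥ ·) (nhdsWithin (0:ℝ) (Set.Ioi 0))
        (fun ε : ℝ => (volume
            ((Set.Icc (0 : ℝ) 1 \ {τ : ℝ | τ ∈ Set.Icc (0 : ℝ) 1 ∧ ev τ γ ∈ ev t '' G}) ∩
              Set.Ioo (t - ε) (t + ε))).toReal / (2 * ε)) := by
      refine ⟨0, ?_⟩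
      rw [Filter.eventually_map]
      filter_upwards [self_mem_nhdsWithin] with ε hε
      have : (0:ℝ) < ε := hε
      positivity
    have hev := Filter.eventually_lt_of_lt_liminf (hlb γ hγ) hbdd
    have hten : Filter.Tendsto e Filter.atTop (nhdsWithin (0:ℝ) (Set.Ioi 0)) := by
      refine tendsto_nhdsWithin_of_tendsto_nhds_of_eventually_within _ ?_ ?_
      · exact tendsto_one_div_add_atTop_nhds_zero_nat
      · exact Filter.Eventually.of_forall fun m => hepos m
    have := (hten.eventually hev)
    rw [Filter.eventually_atTop] at this
    obtain ⟨k, hk⟩ := this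
    refine Set.mem_iUnion.2 ⟨k, hγ, ?_⟩
    refine Set.mem_iInter.2 fun m => Set.mem_iInter.2 fun hm => ?_
    have hαm := hk m hm
    have hfin : F γ m ≠ ⊤ := by
      refine ne_top_of_le_ne_top ?_ (measure_mono Set.inter_subset_right)
      simp [measure_Ioo_lt_top.ne]
    have hFeq : Prod.mk γ ⁻¹' S =
        Set.Icc (0 : ℝ) 1 \ {τ : ℝ | τ ∈ Set.Icc (0 : ℝ) 1 ∧ ev τ γ ∈ ev t '' G} :=
      hslice γ
    have hαm' : α < (F γ m).toReal / (2 * e m) := by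
      simpa [hFdef, hFeq, hK] using hαm
    have h2e : (0:ℝ) < 2 * e m := by have := hepos m; linarith
    have hlt : 2 * α * e m ≤ (F γ m).toReal := by
      rw [lt_div_iff₀ h2e] at hαm'
      nlinarith [hepos m]
    simp only [Set.mem_setOf_eq]
    calc ENNReal.ofReal (2 * α * e m) ≤ ENNReal.ofReal (F γ m).toReal :=
          ENNReal.ofReal_le_ofReal hlt
      _ = F γ m := ENNReal.ofReal_toReal hfin
  -- find k with positive measure
  have hex : ∃ k, 0 < P (Hk k) := by
    by_contra h
    push_neg at h
    have h0 : ∀ k, P (Hk k) = 0 := fun k => le_antisymm (h k) zero_le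
    have : P H = 0 :=
      le_antisymm (le_trans (measure_mono hcover) (le_of_eq (measure_iUnion_null h0)))
        zero_le
    exact absurd this hHpos.ne'
  obtain ⟨k, hkpos⟩ := hex
  set p : ℝ := (P (Hk k)).toReal with hp
  have hpfin : P (Hk k) ≠ ⊤ := measure_ne_top P _
  have hppos : 0 < p := ENNReal.toReal_pos hkpos.ne' hpfin
  refine ⟨α * p / 2, by positivity, ?_⟩
  -- key step: for each m ≥ k find a good time
  have key : ∀ m, k ≤ m → ∃ τ ∈ Set.Ioo (t - e m) (t + e m),
      ENNReal.ofReal (α * p / 2) ≤ P (Hk k ∩ {γ | (γ, τ) ∈ S}) := by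
    intro m hm
    by_contra hcon
    push_neg at hcon
    set μ : Measure ℝ := volume.restrict (Set.Ioo (t - e m) (t + e m)) with hμ
    set ν : Measure C(unitInterval, X) := P.restrict (Hk k) with hν
    have hνfin : IsFiniteMeasure ν := by
      constructor
      rw [hν, Measure.restrict_apply_univ]
      exact measure_lt_top P _
    have lower : ENNReal.ofReal (2 * α * e m) * P (Hk k) ≤ (ν.prod μ) S := by
      rw [Measure.prod_apply hSmeas]
      have h1 : ∀ γ ∈ Hk k, ENNReal.ofReal (2 * α * e m) ≤ μ (Prod.mk γ ⁻¹' S) := by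
        intro γ hγ
        have := hγ.2
        rw [Set.mem_iInter] at this
        have h2 := Set.mem_iInter.1 (this m) hm
        rw [hμ, Measure.restrict_apply (hslicemeas γ)]
        exact h2
      calc ENNReal.ofReal (2 * α * e m) * P (Hk k)
          = ∫⁻ _ in Hk k, ENNReal.ofReal (2 * α * e m) ∂P :=
            (setLIntegral_const _ _).symm
        _ ≤ ∫⁻ γ in Hk k, μ (Prod.mk γ ⁻¹' S) ∂P :=
            setLIntegral_mono (measurable_measure_prodMk_left hSmeas) h1
        _ = ∫⁻ γ, μ (Prod.mk γ ⁻¹' S) ∂ν := rfl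
    have upper : (ν.prod μ) S ≤ ENNReal.ofReal (α * p / 2) * ENNReal.ofReal (2 * e m) := by
      rw [Measure.prod_apply_symm hSmeas]
      have h1 : ∀ τ ∈ Set.Ioo (t - e m) (t + e m),
          ν ((fun γ => (γ, τ)) ⁻¹' S) ≤ ENNReal.ofReal (α * p / 2) := by
        intro τ hτ
        have hms : MeasurableSet ((fun γ => (γ, τ)) ⁻¹' S) :=
          hSmeas.preimage measurable_prodMk_right
        rw [hν, Measure.restrict_apply hms]
        have := (hcon τ hτ).le
        rwa [Set.inter_comm] at this
      calc ∫⁻ τ, ν ((fun γ => (γ, τ)) ⁻¹' S) ∂μ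
          ≤ ∫⁻ _ in Set.Ioo (t - e m) (t + e m), ENNReal.ofReal (α * p / 2) ∂volume :=
            setLIntegral_mono measurable_const h1
        _ = ENNReal.ofReal (α * p / 2) * volume (Set.Ioo (t - e m) (t + e m)) :=
            setLIntegral_const _ _
        _ = ENNReal.ofReal (α * p / 2) * ENNReal.ofReal (2 * e m) := by
            rw [Real.volume_Ioo]
            congr 1
            ring_nf
    have hcomb := le_trans lower upper
    rw [show P (Hk k) = ENNReal.ofReal p from (ENNReal.ofReal_toReal hpfin).symm,
      ← ENNReal.ofReal_mul (by positivity), ← ENNReal.ofReal_mul (by positivity)] at hcomb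
    rw [ENNReal.ofReal_le_ofReal_iff (by positivity)] at hcomb
    have hem := hepos m
    nlinarith [mul_pos (mul_pos hα hem) hppos]
  have key' : ∀ n : ℕ, ∃ τ ∈ Set.Ioo (t - e (n + k)) (t + e (n + k)),
      ENNReal.ofReal (α * p / 2) ≤ P (Hk k ∩ {γ | (γ, τ) ∈ S}) :=
    fun n => key (n + k) (Nat.le_add_left _ _)
  choose τf hτ1 hτ2 using key'
  refine ⟨fun n => τf n - t, ?_, ?_⟩
  · refine squeeze_zero_norm (a := fun n : ℕ => 1 / (n + 1 : ℝ)) ?_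
      tendsto_one_div_add_atTop_nhds_zero_nat
    intro n
    have h1 := (hτ1 n).1
    have h2 := (hτ1 n).2
    have he2 : e (n + k) ≤ 1 / (n + 1 : ℝ) := by
      simp only [he]
      apply one_div_le_one_div_of_le (by positivity)
      have hk0 : (0:ℝ) ≤ (k : ℝ) := Nat.cast_nonneg k
      push_cast
      linarith
    rw [Real.norm_eq_abs]
    have := (abs_lt.2 ⟨by linarith, by linarith⟩ :
      |τf n - t| < e (n + k))
    linarith [abs_nonneg (τf n - t)]
  · intro n
    refine le_trans (hτ2 n) (measure_mono ?_)
    intro γ hγ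
    refine ⟨hHksub k hγ.1, ?_⟩
    have : (γ, τf n) ∈ S := hγ.2
    have heq : t + (τf n - t) = τf n := by ring
    rw [heq]
    rw [hSdef] at this
    exact ⟨this.1, fun hmem => this.2 hmem.2⟩
end
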